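/- arXiv:2403.06499 — 3 statements merged into one kernel-verified Lean document; each statement's English description precedes it below -/
import Mathlib

section
/- The parametric complexity of the categorical model satisfies the recurrence C(K+2, n) = C(K+1, n) + (n/K) · C(K, n), where C(K, n) = Σ over compositions (h₁,...,h_K) of n into K nonnegative parts of [n!/(h₁!···h_K!)] · Π_{k=1}^{K} (h_k/n)^{h_k} (with convention 0^0 = 1). -/
open Finset PowerSeries

lemma alt_sum_succ (n : ℕ) (q : ℕ → ℝ) :
    ∑ k ∈ range (n+2), (-1:ℝ)^(n+1-k) * ((n+1).choose k) * q k
      = ∑ k ∈ range (n+1), (-1:ℝ)^(n-k) * (n.choose k) * (q (k+1) - q k) := by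
  have hg : ∀ k ∈ range (n+1), (-1:ℝ)^(n+1-k) * ((n).choose k) * q k
      = -((-1:ℝ)^(n-k) * (n.choose k) * q k) := by
    intro k hk
    have hk' : k ≤ n := by simpa [Nat.lt_succ_iff] using hk
    have h : n + 1 - k = (n - k) + 1 := by omega
    rw [h, pow_succ]; ring
  calc ∑ k ∈ range (n+2), (-1:ℝ)^(n+1-k) * ((n+1).choose k) * q k
      = (∑ k ∈ range (n+1), (-1:ℝ)^(n+1-(k+1)) * ((n+1).choose (k+1)) * q (k+1))
        + (-1:ℝ)^(n+1-0) * ((n+1).choose 0) * q 0 :=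
        Finset.sum_range_succ' (fun k => (-1:ℝ)^(n+1-k) * ((n+1).choose k) * q k) (n+1)
    _ = (∑ k ∈ range (n+1), ((-1:ℝ)^(n-k) * (n.choose k) * q (k+1)
          + (-1:ℝ)^(n-k) * (n.choose (k+1)) * q (k+1)))
        + (-1:ℝ)^(n+1) * q 0 := by
        congr 1
        · apply Finset.sum_congr rfl
          intro k hk
          have h : n + 1 - (k+1) = n - k := by omega
          rw [h, Nat.choose_succ_succ]
          push_cast
          ring
        · simp
    _ = (∑ k ∈ range (n+1), (-1:ℝ)^(n-k) * (n.choose k) * q (k+1))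
        + ((∑ k ∈ range (n+1), (-1:ℝ)^(n-k) * (n.choose (k+1)) * q (k+1))
        + (-1:ℝ)^(n+1) * q 0) := by
        rw [Finset.sum_add_distrib]; ring
    _ = (∑ k ∈ range (n+1), (-1:ℝ)^(n-k) * (n.choose k) * q (k+1))
        + ∑ k ∈ range (n+1), (-1:ℝ)^(n+1-k) * ((n).choose k) * q k := by
        congr 1
        have hsh : ∑ k ∈ range (n+1), (-1:ℝ)^(n-k) * (n.choose (k+1)) * q (k+1)
            = (∑ k ∈ range (n+2), (-1:ℝ)^(n+1-k) * ((n).choose k) * q k)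
              - (-1:ℝ)^(n+1-0) * ((n).choose 0) * q 0 := by
          rw [Finset.sum_range_succ' (fun k => (-1:ℝ)^(n+1-k) * ((n).choose k) * q k) (n+1)]
          rw [add_sub_cancel_right]
          apply Finset.sum_congr rfl
          intro k hk
          have h : n + 1 - (k+1) = n - k := by omega
          rw [h]
        rw [hsh, Finset.sum_range_succ]
        simp
    _ = (∑ k ∈ range (n+1), (-1:ℝ)^(n-k) * (n.choose k) * q (k+1))
        - ∑ k ∈ range (n+1), (-1:ℝ)^(n-k) * ((n).choose k) * q k := by
        rw [Finset.sum_congr rfl hg, Finset.sum_neg_distrib]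
        ring
    _ = ∑ k ∈ range (n+1), (-1:ℝ)^(n-k) * (n.choose k) * (q (k+1) - q k) := by
        rw [← Finset.sum_sub_distrib]
        apply Finset.sum_congr rfl
        intro k _
        ring

/-- Finite difference of `(x+k)^d` : vanishes for `d < n`, equals `n!` for `d = n`. -/
lemma findiff : ∀ (n : ℕ), ∀ (d : ℕ), d ≤ n → ∀ (x : ℝ),
    ∑ k ∈ range (n+1), (-1:ℝ)^(n-k) * (n.choose k) * (x + k)^d
      = if d = n then (n.factorial : ℝ) else 0 := by
  intro n
  induction n with
  | zero =>
    intro d hd x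
    interval_cases d
    simp
  | succ n ih =>
    intro d hd x
    rw [alt_sum_succ n (fun k => (x + k)^d)]
    have hdiff : ∀ k : ℕ, (x + ((k:ℕ)+1:ℕ))^d - (x + k)^d
        = ∑ j ∈ range d, (d.choose j : ℝ) * (x + k)^j := by
      intro k
      have hb : (x + ((k:ℕ)+1:ℕ) : ℝ) = (x + k) + 1 := by push_cast; ring
      rw [hb, add_pow]
      simp only [one_pow, mul_one]
      rw [Finset.sum_range_succ]
      simp only [Nat.choose_self, Nat.cast_one, mul_one]
      rw [add_sub_cancel_right]
      apply Finset.sum_congr rfl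
      intro j _; ring
    calc ∑ k ∈ range (n+1), (-1:ℝ)^(n-k) * (n.choose k) * ((x + ((k:ℕ)+1:ℕ))^d - (x + k)^d)
        = ∑ k ∈ range (n+1), ∑ j ∈ range d,
            (d.choose j : ℝ) * ((-1:ℝ)^(n-k) * (n.choose k) * (x + k)^j) := by
          apply Finset.sum_congr rfl
          intro k _
          rw [hdiff k, Finset.mul_sum]
          apply Finset.sum_congr rfl
          intro j _; ring
      _ = ∑ j ∈ range d, (d.choose j : ℝ) *
            (∑ k ∈ range (n+1), (-1:ℝ)^(n-k) * (n.choose k) * (x + k)^j) := by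
          rw [Finset.sum_comm]
          apply Finset.sum_congr rfl
          intro j _
          rw [Finset.mul_sum]
      _ = ∑ j ∈ range d, (d.choose j : ℝ) * (if j = n then (n.factorial : ℝ) else 0) := by
          apply Finset.sum_congr rfl
          intro j hj
          have hj' : j < d := Finset.mem_range.mp hj
          rw [ih j (by omega) x]
      _ = if d = n + 1 then ((n+1).factorial : ℝ) else 0 := by
          by_cases hdn : d = n + 1
          · subst hdn
            rw [if_pos rfl]
            rw [Finset.sum_eq_single n]
            · simp [Nat.choose_succ_self_right, Nat.factorial_succ]
            · intro j hj hjn; simp [hjn]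
            · intro h; exact absurd (Finset.self_mem_range_succ n) h
          · rw [if_neg hdn]
            apply Finset.sum_eq_zero
            intro j hj
            have : j < d := Finset.mem_range.mp hj
            have : j ≠ n := by omega
            simp [this]

noncomputable def Ffun (n : ℕ) (x y : ℝ) : ℝ :=
  ∑ k ∈ range (n+1), (n.choose k : ℝ) * (x + k)^k * (y + ((n - k : ℕ):ℝ))^(n-k)

noncomputable def Gfun (n : ℕ) (x y : ℝ) : ℝ :=
  ∑ j ∈ range (n+1), (n.descFactorial j : ℝ) * (x + y + n)^(n-j)

lemma hasDerivAt_Ffun (n : ℕ) (x y : ℝ) :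
    HasDerivAt (fun z => Ffun (n+1) x z) ((n+1) * Ffun n x (y+1)) y := by
  have h : ∀ k ∈ range (n+2), HasDerivAt
      (fun z : ℝ => ((n+1).choose k : ℝ) * (x + k)^k * (z + ((n+1-k : ℕ):ℝ))^(n+1-k))
      (((n+1).choose k : ℝ) * (x + k)^k *
        ((n+1-k : ℕ) * (y + ((n+1-k : ℕ):ℝ))^(n+1-k-1))) y := by
    intro k _
    exact (by simpa using ((hasDerivAt_id y).add_const ((n+1-k : ℕ):ℝ)).fun_pow (n+1-k) :
      HasDerivAt (fun z : ℝ => (z + ((n+1-k : ℕ):ℝ))^(n+1-k))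
        ((n+1-k : ℕ) * (y + ((n+1-k : ℕ):ℝ))^(n+1-k-1)) y).const_mul _
  have hsum := HasDerivAt.fun_sum h
  have heq : ∑ k ∈ range (n+2), ((n+1).choose k : ℝ) * (x + k)^k *
        ((n+1-k : ℕ) * (y + ((n+1-k : ℕ):ℝ))^(n+1-k-1))
      = (n+1) * Ffun n x (y+1) := by
    rw [Finset.sum_range_succ]
    simp only [Nat.sub_self, Nat.cast_zero, zero_mul, mul_zero, add_zero]
    rw [Ffun, Finset.mul_sum]
    apply Finset.sum_congr rfl
    intro k hk
    have hk' : k ≤ n := by simpa [Nat.lt_succ_iff] using hk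
    have h1 : ((n+1).choose k : ℝ) * ((n+1-k : ℕ):ℝ) = (n+1) * (n.choose k : ℝ) := by
      rw [← Nat.cast_mul, ← Nat.choose_mul_succ_eq]
      push_cast; ring
    have h2 : (y + ((n+1-k : ℕ):ℝ)) = (y + 1) + ((n-k:ℕ):ℝ) := by
      have : n + 1 - k = (n - k) + 1 := by omega
      rw [this]; push_cast; ring
    have h3 : n + 1 - k - 1 = n - k := by omega
    rw [h2, h3]
    calc ((n+1).choose k : ℝ) * (x + k)^k * (((n+1-k : ℕ):ℝ) * ((y+1) + ((n-k:ℕ):ℝ))^(n-k))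
        = (((n+1).choose k : ℝ) * ((n+1-k : ℕ):ℝ)) * (x + k)^k * ((y+1) + ((n-k:ℕ):ℝ))^(n-k) := by ring
      _ = (n+1) * ((n.choose k : ℝ) * (x + k)^k * ((y+1) + ((n-k:ℕ):ℝ))^(n-k)) := by rw [h1]; ring
  rw [← heq]
  exact hsum

lemma hasDerivAt_Gfun (n : ℕ) (x y : ℝ) :
    HasDerivAt (fun z => Gfun (n+1) x z) ((n+1) * Gfun n x (y+1)) y := by
  have h : ∀ j ∈ range (n+2), HasDerivAt
      (fun z : ℝ => ((n+1).descFactorial j : ℝ) * (x + z + (n+1))^(n+1-j))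
      (((n+1).descFactorial j : ℝ) * ((n+1-j : ℕ) * (x + y + (n+1))^(n+1-j-1))) y := by
    intro j _
    have hbase : HasDerivAt (fun z : ℝ => (x + z + (n+1))^(n+1-j))
        ((n+1-j : ℕ) * (x + y + (n+1))^(n+1-j-1)) y := by
      have hb : HasDerivAt (fun z : ℝ => x + z + (n+1)) 1 y := by
        simpa using ((hasDerivAt_id y).const_add x).add_const ((n+1 : ℕ):ℝ)
      simpa using hb.fun_pow (n+1-j)
    exact hbase.const_mul _
  have hsum := HasDerivAt.fun_sum h
  have heq : ∑ j ∈ range (n+2), ((n+1).descFactorial j : ℝ) *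
        ((n+1-j : ℕ) * (x + y + (n+1))^(n+1-j-1))
      = (n+1) * Gfun n x (y+1) := by
    rw [Finset.sum_range_succ]
    simp only [Nat.sub_self, Nat.cast_zero, zero_mul, mul_zero, add_zero]
    rw [Gfun, Finset.mul_sum]
    apply Finset.sum_congr rfl
    intro j hj
    have hj' : j ≤ n := by simpa [Nat.lt_succ_iff] using hj
    have h1 : ((n+1).descFactorial j : ℝ) * ((n+1-j : ℕ):ℝ)
        = (n+1) * (n.descFactorial j : ℝ) := by
      rw [← Nat.cast_mul, mul_comm ((n+1).descFactorial j), ← Nat.descFactorial_succ,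
        Nat.succ_descFactorial_succ]
      push_cast; ring
    have h2 : (x + y + ((n+1:ℕ):ℝ)) = x + (y + 1) + (n:ℝ) := by push_cast; ring
    have h3 : n + 1 - j - 1 = n - j := by omega
    have h2' : (x + y + ((n:ℝ)+1)) = x + (y + 1) + (n:ℝ) := by ring
    rw [h3, h2']
    calc ((n+1).descFactorial j : ℝ) * (((n+1-j : ℕ):ℝ) * (x + (y+1) + (n:ℝ))^(n-j))
        = (((n+1).descFactorial j : ℝ) * ((n+1-j : ℕ):ℝ)) * (x + (y+1) + (n:ℝ))^(n-j) := by ring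
      _ = (n+1) * ((n.descFactorial j : ℝ) * (x + (y+1) + (n:ℝ))^(n-j)) := by rw [h1]; ring
  rw [← heq]
  have : (fun z => Gfun (n+1) x z)
      = fun z : ℝ => ∑ j ∈ range (n+2), ((n+1).descFactorial j : ℝ) * (x + z + (n+1))^(n+1-j) := by
    funext z
    rw [Gfun]
    push_cast
    rfl
  rw [this]
  exact hsum

lemma Ffun_boundary (n : ℕ) (x : ℝ) : Ffun n x (-x - n) = (n.factorial : ℝ) := by
  rw [Ffun]
  have h : ∀ k ∈ range (n+1), (n.choose k : ℝ) * (x + k)^k * ((-x - n) + ((n - k : ℕ):ℝ))^(n-k)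
      = (-1:ℝ)^(n-k) * (n.choose k) * (x + k)^n := by
    intro k hk
    have hk' : k ≤ n := by simpa [Nat.lt_succ_iff] using hk
    have hb : ((-x - n) + ((n - k : ℕ):ℝ)) = -(x + k) := by
      have : ((n - k : ℕ):ℝ) = (n:ℝ) - k := by
        rw [Nat.cast_sub hk']
      rw [this]; ring
    rw [hb, neg_pow]
    have hsplit : (x + k)^k * (x + k)^(n-k) = (x + k)^n := by
      rw [← pow_add]
      congr 1
      omega
    calc (n.choose k : ℝ) * (x + k)^k * ((-1)^(n-k) * (x + k)^(n-k))
        = (-1:ℝ)^(n-k) * (n.choose k) * ((x + k)^k * (x + k)^(n-k)) := by ring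
      _ = (-1:ℝ)^(n-k) * (n.choose k) * (x + k)^n := by rw [hsplit]
  rw [Finset.sum_congr rfl h, findiff n n le_rfl x, if_pos rfl]

lemma Gfun_boundary (n : ℕ) (x : ℝ) : Gfun n x (-x - n) = (n.factorial : ℝ) := by
  rw [Gfun]
  have hb : (x + (-x - n) + (n:ℝ)) = 0 := by ring
  rw [Finset.sum_congr rfl (fun j _ => by rw [hb])]
  rw [Finset.sum_range_succ]
  simp only [Nat.sub_self, pow_zero, mul_one, Nat.descFactorial_self]
  rw [Finset.sum_eq_zero, zero_add]
  intro j hj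
  have : n - j ≠ 0 := by have := Finset.mem_range.mp hj; omega
  rw [zero_pow this, mul_zero]

lemma cauchy : ∀ (n : ℕ) (x y : ℝ), Ffun n x y = Gfun n x y := by
  intro n
  induction n with
  | zero => intro x y; simp [Ffun, Gfun]
  | succ n ih =>
    intro x y
    have hder : ∀ z : ℝ, HasDerivAt (fun z => Ffun (n+1) x z - Gfun (n+1) x z) 0 z := by
      intro z
      have := (hasDerivAt_Ffun n x z).fun_sub (hasDerivAt_Gfun n x z)
      simpa [ih] using this
    have hconst := is_const_of_deriv_eq_zero
      (f := fun z => Ffun (n+1) x z - Gfun (n+1) x z)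
      (fun z => (hder z).differentiableAt) (fun z => (hder z).deriv)
    have h0 := hconst y (-x - (n+1))
    have hF := Ffun_boundary (n+1) x
    have hG := Gfun_boundary (n+1) x
    push_cast at hF hG h0 ⊢
    have : Ffun (n+1) x y - Gfun (n+1) x y = 0 := by
      rw [h0, hF, hG]; ring
    linarith

noncomputable def bb (h : ℕ) : ℝ := (h:ℝ)^h / (h.factorial : ℝ)
noncomputable def s2 (n : ℕ) : ℝ := ∑ p ∈ Finset.HasAntidiagonal.antidiagonal n, bb p.1 * bb p.2
noncomputable def s3 (n : ℕ) : ℝ := ∑ p ∈ Finset.HasAntidiagonal.antidiagonal n, bb p.1 * s2 p.2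

lemma g_closed (n : ℕ) : (n.factorial : ℝ) * s2 n
    = ∑ j ∈ range (n+1), (n.descFactorial j : ℝ) * (n:ℝ)^(n-j) := by
  have h1 : (n.factorial : ℝ) * s2 n = Ffun n 0 0 := by
    rw [s2, Finset.Nat.sum_antidiagonal_eq_sum_range_succ_mk, Finset.mul_sum, Ffun]
    apply Finset.sum_congr rfl
    intro k hk
    have hk' : k ≤ n := by simpa [Nat.lt_succ_iff] using hk
    have hfac : (n.factorial : ℝ)
        = (n.choose k : ℝ) * (k.factorial : ℝ) * ((n-k).factorial : ℝ) := by
      exact_mod_cast (Nat.choose_mul_factorial_mul_factorial hk').symm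
    rw [bb, bb, hfac]
    have h2 : (k.factorial : ℝ) ≠ 0 := Nat.cast_ne_zero.mpr (Nat.factorial_ne_zero k)
    have h3 : ((n-k).factorial : ℝ) ≠ 0 := Nat.cast_ne_zero.mpr (Nat.factorial_ne_zero _)
    field_simp
    ring
  rw [h1, cauchy n 0 0, Gfun]
  apply Finset.sum_congr rfl
  intro j _
  norm_num

lemma choose_descFactorial_swap (n a j : ℕ) (ha : a ≤ n) (hj : j ≤ n) :
    n.choose a * (n-a).descFactorial j = n.descFactorial j * (n-j).choose a := by
  by_cases h : a + j ≤ n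
  · have key : ∀ u v : ℕ, u = v →
        u * (a.factorial * ((n-a)-j).factorial) = v * (a.factorial * ((n-a)-j).factorial) :=
      fun u v huv => by rw [huv]
    apply Nat.eq_of_mul_eq_mul_right
      (Nat.mul_pos a.factorial_pos (Nat.factorial_pos ((n-a)-j)))
    have e1 : n.choose a * (n-a).descFactorial j * (a.factorial * ((n-a)-j).factorial)
        = n.factorial := by
      have d1 : ((n-a)-j).factorial * (n-a).descFactorial j = (n-a).factorial :=
        Nat.factorial_mul_descFactorial (by omega)
      have c1 : n.choose a * a.factorial * (n-a).factorial = n.factorial :=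
        Nat.choose_mul_factorial_mul_factorial ha
      calc n.choose a * (n-a).descFactorial j * (a.factorial * ((n-a)-j).factorial)
          = n.choose a * a.factorial * (((n-a)-j).factorial * (n-a).descFactorial j) := by ring
        _ = n.choose a * a.factorial * (n-a).factorial := by rw [d1]
        _ = n.factorial := c1
    have e2 : n.descFactorial j * (n-j).choose a * (a.factorial * ((n-a)-j).factorial)
        = n.factorial := by
      have c2 : (n-j).choose a * a.factorial * ((n-j)-a).factorial = (n-j).factorial :=
        Nat.choose_mul_factorial_mul_factorial (by omega)
      have d2 : (n-j).factorial * n.descFactorial j = n.factorial :=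
        Nat.factorial_mul_descFactorial hj
      have hee : (n-a)-j = (n-j)-a := by omega
      calc n.descFactorial j * (n-j).choose a * (a.factorial * ((n-a)-j).factorial)
          = ((n-j).choose a * a.factorial * ((n-a)-j).factorial) * n.descFactorial j := by ring
        _ = ((n-j).choose a * a.factorial * ((n-j)-a).factorial) * n.descFactorial j := by
            rw [hee]
        _ = (n-j).factorial * n.descFactorial j := by rw [c2]
        _ = n.factorial := d2
    rw [e1, e2]
  · have h1 : (n-a).descFactorial j = 0 :=
      Nat.descFactorial_eq_zero_iff_lt.mpr (by omega)
    have h2 : (n-j).choose a = 0 := Nat.choose_eq_zero_of_lt (by omega)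
    rw [h1, h2, mul_zero, mul_zero]

lemma double_sum_shift (N : ℕ) (F : ℕ → ℝ) (hF : ∀ m, N ≤ m → F m = 0) :
    ∑ j ∈ range N, ∑ i ∈ range N, F (j+i) = ∑ m ∈ range N, ((m:ℝ)+1) * F m := by
  have h1 : ∀ j ∈ range N, ∑ i ∈ range N, F (j+i) = ∑ m ∈ Ico j N, F m := by
    intro j hj
    have hj' : j < N := Finset.mem_range.mp hj
    rw [Finset.sum_Ico_eq_sum_range]
    -- extend range (N-j) to range N on the right
    rw [← Finset.sum_subset (Finset.range_subset_range.mpr (by omega : N - j ≤ N))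
      (by
        intro x hx hxs
        apply hF
        simp only [Finset.mem_range, not_lt] at hx hxs
        omega)]
  rw [Finset.sum_congr rfl h1]
  have h2 : ∑ j ∈ Ico 0 N, ∑ m ∈ Ico j N, F m
      = ∑ m ∈ Ico 0 N, ∑ j ∈ Ico 0 (m+1), F m := Finset.sum_Ico_Ico_comm 0 N (fun j m => F m)
  rw [show range N = Ico 0 N from by rw [Finset.range_eq_Ico], h2]
  apply Finset.sum_congr rfl
  intro m _
  rw [Finset.sum_const, Nat.card_Ico, nsmul_eq_mul]
  push_cast
  ring

lemma f_closed (n : ℕ) : (n.factorial : ℝ) * s3 n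
    = ∑ m ∈ range (n+1), ((m:ℝ)+1) * ((n.descFactorial m : ℝ) * (n:ℝ)^(n-m)) := by
  have step1 : (n.factorial : ℝ) * s3 n
      = ∑ a ∈ range (n+1), ∑ j ∈ range (n+1),
          ((n.choose a : ℝ) * ((n-a).descFactorial j : ℝ)) * (a:ℝ)^a * ((n-a:ℕ):ℝ)^((n-a)-j) := by
    rw [s3, Finset.Nat.sum_antidiagonal_eq_sum_range_succ_mk, Finset.mul_sum]
    apply Finset.sum_congr rfl
    intro a ha
    have ha' : a ≤ n := by simpa [Nat.lt_succ_iff] using ha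
    have hfac : (n.factorial : ℝ)
        = (n.choose a : ℝ) * (a.factorial : ℝ) * ((n-a).factorial : ℝ) := by
      exact_mod_cast (Nat.choose_mul_factorial_mul_factorial ha').symm
    have e1 : (n.factorial : ℝ) * (bb a * s2 (n-a))
        = (n.choose a : ℝ) * (a:ℝ)^a * (((n-a).factorial : ℝ) * s2 (n-a)) := by
      rw [hfac, bb]
      have h2 : (a.factorial : ℝ) ≠ 0 := Nat.cast_ne_zero.mpr (Nat.factorial_ne_zero a)
      field_simp
    rw [e1, g_closed (n-a), Finset.mul_sum]
    -- now extend inner sum from range (n-a+1) to range (n+1)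
    rw [← Finset.sum_subset (Finset.range_subset_range.mpr (by omega : (n-a)+1 ≤ n+1))
      (by
        intro j hj hjs
        simp only [Finset.mem_range, not_lt] at hj hjs
        have : (n-a).descFactorial j = 0 := Nat.descFactorial_eq_zero_iff_lt.mpr (by omega)
        rw [this]
        push_cast
        ring)]
    apply Finset.sum_congr rfl
    intro j _
    ring
  rw [step1, Finset.sum_comm]
  have step2 : ∀ j ∈ range (n+1),
      ∑ a ∈ range (n+1),
          ((n.choose a : ℝ) * ((n-a).descFactorial j : ℝ)) * (a:ℝ)^a * ((n-a:ℕ):ℝ)^((n-a)-j)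
      = (n.descFactorial j : ℝ) * Ffun (n-j) 0 (j:ℝ) := by
    intro j hj
    have hj' : j ≤ n := by simpa [Nat.lt_succ_iff] using hj
    have hterm : ∀ a ∈ range (n+1),
        ((n.choose a : ℝ) * ((n-a).descFactorial j : ℝ)) * (a:ℝ)^a * ((n-a:ℕ):ℝ)^((n-a)-j)
        = (n.descFactorial j : ℝ) *
            (((n-j).choose a : ℝ) * (a:ℝ)^a * ((n-a:ℕ):ℝ)^((n-a)-j)) := by
      intro a ha
      have ha' : a ≤ n := by simpa [Nat.lt_succ_iff] using ha
      have := choose_descFactorial_swap n a j ha' hj'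
      have hc : (n.choose a : ℝ) * ((n-a).descFactorial j : ℝ)
          = (n.descFactorial j : ℝ) * ((n-j).choose a : ℝ) := by exact_mod_cast congrArg (Nat.cast : ℕ → ℝ) this
      rw [hc]; ring
    rw [Finset.sum_congr rfl hterm, ← Finset.mul_sum]
    congr 1
    -- shrink to range (n-j+1), then match Ffun
    rw [Ffun]
    rw [← Finset.sum_subset (Finset.range_subset_range.mpr (by omega : (n-j)+1 ≤ n+1))
      (by
        intro a ha has
        simp only [Finset.mem_range, not_lt] at ha has
        have : (n-j).choose a = 0 := Nat.choose_eq_zero_of_lt (by omega)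
        rw [this]
        push_cast
        ring)]
    apply Finset.sum_congr rfl
    intro a ha
    have ha' : a ≤ n - j := by simpa [Nat.lt_succ_iff] using ha
    have h4 : ((n-a:ℕ):ℝ) = (j:ℝ) + (((n-j)-a:ℕ):ℝ) := by
      exact_mod_cast congrArg (Nat.cast : ℕ → ℝ) (by omega : n - a = j + ((n-j)-a))
    have h5 : (n-a)-j = (n-j)-a := by omega
    rw [h4, h5]
    norm_num
  rw [Finset.sum_congr rfl step2]
  have step3 : ∀ j ∈ range (n+1),
      (n.descFactorial j : ℝ) * Ffun (n-j) 0 (j:ℝ)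
      = ∑ i ∈ range (n+1),
          ((n.descFactorial (j+i) : ℝ) * (n:ℝ)^(n-(j+i))) := by
    intro j hj
    have hj' : j ≤ n := by simpa [Nat.lt_succ_iff] using hj
    rw [cauchy (n-j) 0 (j:ℝ), Gfun]
    have hbase : (0:ℝ) + (j:ℝ) + ((n-j:ℕ):ℝ) = (n:ℝ) := by
      have : ((n-j:ℕ):ℝ) = (n:ℝ) - (j:ℝ) := by
        rw [Nat.cast_sub hj']
      rw [this]; ring
    rw [Finset.mul_sum]
    rw [← Finset.sum_subset (Finset.range_subset_range.mpr (by omega : (n-j)+1 ≤ n+1))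
      (by
        intro i hi his
        simp only [Finset.mem_range, not_lt] at hi his
        have : n.descFactorial (j+i) = 0 := Nat.descFactorial_eq_zero_iff_lt.mpr (by omega)
        rw [this]
        push_cast
        ring)]
    apply Finset.sum_congr rfl
    intro i hi
    have hi' : i ≤ n - j := by simpa [Nat.lt_succ_iff] using hi
    have hd : n.descFactorial (j+i) = (n-j).descFactorial i * n.descFactorial j := by
      have := Nat.descFactorial_mul_descFactorial (show j ≤ j + i by omega) (n := n)
      simpa using this.symm
    have he : n - (j+i) = (n-j)-i := by omega
    rw [hbase, hd, he]
    push_cast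
    ring
  rw [Finset.sum_congr rfl step3]
  exact double_sum_shift (n+1) (fun m => (n.descFactorial m : ℝ) * (n:ℝ)^(n-m))
    (fun m hm => by
      have h : n.descFactorial m = 0 := Nat.descFactorial_eq_zero_iff_lt.mpr (by omega)
      simp only [h]; push_cast; ring)

lemma telescope (n : ℕ) :
    ∑ m ∈ range (n+1), (m:ℝ) * ((n.descFactorial m : ℝ) * (n:ℝ)^(n-m)) = (n:ℝ)^(n+1) := by
  have key : ∀ m ∈ range (n+1), (m:ℝ) * ((n.descFactorial m : ℝ) * (n:ℝ)^(n-m))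
      = (fun m => (n.descFactorial m : ℝ) * (n:ℝ)^(n+1-m)) m
        - (fun m => (n.descFactorial m : ℝ) * (n:ℝ)^(n+1-m)) (m+1) := by
    intro m hm
    have hm' : m ≤ n := by simpa [Nat.lt_succ_iff] using hm
    simp only
    have h1 : n + 1 - m = (n - m) + 1 := by omega
    have h2 : n + 1 - (m+1) = n - m := by omega
    have h3 : (n.descFactorial (m+1) : ℝ) = ((n-m:ℕ):ℝ) * (n.descFactorial m : ℝ) := by
      exact_mod_cast congrArg (Nat.cast : ℕ → ℝ) (Nat.descFactorial_succ n m)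
    have h4 : ((n-m:ℕ):ℝ) = (n:ℝ) - (m:ℝ) := by rw [Nat.cast_sub hm']
    rw [h1, h2, h3, h4, pow_succ]
    ring
  rw [Finset.sum_congr rfl key, Finset.sum_range_sub']
  have : n.descFactorial (n+1+1-1) = 0 := by
    apply Nat.descFactorial_eq_zero_iff_lt.mpr; omega
  simp [Nat.descFactorial_eq_zero_iff_lt.mpr (by omega : n < n+1)]

lemma core (n : ℕ) : s3 n - s2 n = (n:ℝ) * bb n := by
  have hfac : (n.factorial : ℝ) ≠ 0 := Nat.cast_ne_zero.mpr (Nat.factorial_ne_zero n)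
  have h : (n.factorial : ℝ) * (s3 n - s2 n) = (n:ℝ)^(n+1) := by
    rw [mul_sub, f_closed, g_closed, ← Finset.sum_sub_distrib, ← telescope n]
    apply Finset.sum_congr rfl
    intro m _
    ring
  have h2 : (n.factorial : ℝ) * ((n:ℝ) * bb n) = (n:ℝ)^(n+1) := by
    rw [bb, pow_succ]
    field_simp
  have := h.trans h2.symm
  exact mul_left_cancel₀ hfac this

noncomputable def B : PowerSeries ℝ := PowerSeries.mk bb

lemma coeff_B (n : ℕ) : coeff n B = bb n := coeff_mk n bb

lemma coeff_B_sq (n : ℕ) : coeff n (B^2) = s2 n := by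
  rw [sq, coeff_mul, s2]
  apply Finset.sum_congr rfl
  intro p _
  rw [coeff_B, coeff_B]

lemma coeff_B_cube (n : ℕ) : coeff n (B^3) = s3 n := by
  rw [show (3:ℕ) = 2 + 1 from rfl, pow_succ', coeff_mul, s3]
  apply Finset.sum_congr rfl
  intro p _
  rw [coeff_B, coeff_B_sq]

lemma key_ps : PowerSeries.X * (PowerSeries.derivative ℝ B) = B^3 - B^2 := by
  ext n
  cases n with
  | zero =>
    simp only [map_sub, coeff_B_cube, coeff_B_sq]
    rw [PowerSeries.coeff_zero_eq_constantCoeff, map_mul]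
    simp only [constantCoeff_X, zero_mul]
    have := core 0
    simp only [Nat.cast_zero, zero_mul] at this
    linarith
  | succ n =>
    rw [coeff_succ_X_mul, PowerSeries.coeff_derivative, map_sub, coeff_B_cube, coeff_B_sq,
      coeff_B, core (n+1)]
    push_cast
    ring

lemma main_ps (K : ℕ) (hK : 1 ≤ K) :
    PowerSeries.X * (PowerSeries.derivative ℝ (B^K)) = (K:ℕ) • (B^(K+2) - B^(K+1)) := by
  rw [Derivation.leibniz_pow]
  have h1 : PowerSeries.X * ((K:ℕ) • B ^ (K - 1) • (PowerSeries.derivative ℝ) B)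
      = (K:ℕ) • (B^(K-1) * (PowerSeries.X * (PowerSeries.derivative ℝ) B)) := by
    rw [smul_eq_mul, mul_smul_comm]
    congr 1
    ring
  rw [h1, key_ps]
  congr 1
  rw [mul_sub, ← pow_add, ← pow_add]
  congr 2 <;> omega

lemma main_coeff (K n : ℕ) (hK : 1 ≤ K) (hn : 1 ≤ n) :
    (n:ℝ) * coeff n (B^K)
      = (K:ℝ) * (coeff n (B^(K+2)) - coeff n (B^(K+1))) := by
  have h := congrArg (coeff n) (main_ps K hK)
  rcases Nat.exists_eq_add_of_le hn with ⟨m, rfl⟩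
  rw [show 1 + m = m + 1 from by omega] at h ⊢
  rw [coeff_succ_X_mul, PowerSeries.coeff_derivative] at h
  rw [map_nsmul, map_sub, nsmul_eq_mul] at h
  rw [← h]
  push_cast
  ring

lemma coeff_pow_tuple (K : ℕ) : ∀ n, coeff n (B^K)
    = ∑ h ∈ Finset.Nat.antidiagonalTuple K n, ∏ i, bb (h i) := by
  induction K with
  | zero =>
    intro n
    rw [pow_zero, PowerSeries.coeff_one]
    cases n with
    | zero => simp [Finset.Nat.antidiagonalTuple_zero_zero]
    | succ n => simp [Finset.Nat.antidiagonalTuple_zero_succ]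
  | succ K ih =>
    intro n
    rw [pow_succ', coeff_mul]
    have h1 : ∀ p ∈ Finset.HasAntidiagonal.antidiagonal n,
        coeff p.1 B * coeff p.2 (B^K)
        = ∑ h ∈ Finset.Nat.antidiagonalTuple K p.2, bb p.1 * ∏ i, bb (h i) := by
      intro p _
      rw [coeff_B, ih, Finset.mul_sum]
    rw [Finset.sum_congr rfl h1]
    rw [Finset.sum_sigma' (Finset.HasAntidiagonal.antidiagonal n)
      (fun p => Finset.Nat.antidiagonalTuple K p.2)
      (fun p h => bb p.1 * ∏ i, bb (h i))]
    apply Finset.sum_nbij' (i := fun q => Fin.cons q.1.1 q.2)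
      (j := fun g => ⟨(g 0, ∑ i : Fin K, g i.succ), Fin.tail g⟩)
    · rintro ⟨⟨a, c⟩, h⟩ hmem
      simp only [Finset.mem_sigma, Finset.HasAntidiagonal.mem_antidiagonal, Finset.Nat.mem_antidiagonalTuple]
        at hmem
      rw [Finset.Nat.mem_antidiagonalTuple, Fin.sum_univ_succ]
      simp only [Fin.cons_zero, Fin.cons_succ]
      rw [hmem.2]
      exact hmem.1
    · intro g hg
      rw [Finset.Nat.mem_antidiagonalTuple, Fin.sum_univ_succ] at hg
      simp only [Finset.mem_sigma, Finset.HasAntidiagonal.mem_antidiagonal, Finset.Nat.mem_antidiagonalTuple]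
      constructor
      · exact hg
      · rfl
    · rintro ⟨⟨a, c⟩, h⟩ hmem
      simp only [Finset.mem_sigma, Finset.HasAntidiagonal.mem_antidiagonal, Finset.Nat.mem_antidiagonalTuple]
        at hmem
      have h0 : (Fin.cons a h : Fin (K+1) → ℕ) 0 = a := Fin.cons_zero _ _
      have ht : Fin.tail (Fin.cons a h : Fin (K+1) → ℕ) = h := Fin.tail_cons _ _
      have hs : ∑ i : Fin K, (Fin.cons a h : Fin (K+1) → ℕ) i.succ = c := by
        simp only [Fin.cons_succ]
        exact hmem.2
      simp only [h0, ht, hs]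
    · intro g hg
      exact Fin.cons_self_tail g
    · rintro ⟨⟨a, c⟩, h⟩ hmem
      simp only
      rw [Fin.prod_univ_succ]
      simp only [Fin.cons_zero, Fin.cons_succ]

/-- Parametric complexity of the `K`-category categorical model:
`C(K, n) = Σ_{h₁+...+h_K = n} (n! / (h₁! ⋯ h_K!)) · Π_k (h_k/n)^{h_k}`,
with the convention `0^0 = 1`. -/
noncomputable def Ccat (K n : ℕ) : ℝ :=
  ∑ h ∈ Finset.Nat.antidiagonalTuple K n,
    ((Nat.factorial n : ℝ) / ∏ k, (Nat.factorial (h k) : ℝ)) *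
      ∏ k, ((h k : ℝ) / (n : ℝ)) ^ (h k)


lemma Ccat_eq (K n : ℕ) (hn : 0 < n) :
    Ccat K n = ((n.factorial : ℝ) / (n:ℝ)^n) * coeff n (B^K) := by
  rw [Ccat, coeff_pow_tuple, Finset.mul_sum]
  apply Finset.sum_congr rfl
  intro h hmem
  have hsum : ∑ i, h i = n := Finset.Nat.mem_antidiagonalTuple.mp hmem
  have h1 : ∏ k, ((h k : ℝ) / (n : ℝ)) ^ (h k)
      = (∏ k, (h k : ℝ)^(h k)) / (n:ℝ)^n := by
    rw [← hsum, ← Finset.prod_pow_eq_pow_sum, ← Finset.prod_div_distrib]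
    apply Finset.prod_congr rfl
    intro i _
    rw [div_pow]
  rw [h1]
  have h2 : ∏ i, bb (h i) = (∏ k, (h k : ℝ)^(h k)) / ∏ k, ((h k).factorial : ℝ) := by
    rw [← Finset.prod_div_distrib]
    rfl
  rw [h2]
  have hf : ∀ k, ((h k).factorial : ℝ) ≠ 0 :=
    fun k => Nat.cast_ne_zero.mpr (Nat.factorial_ne_zero _)
  have hfp : (∏ k, ((h k).factorial : ℝ)) ≠ 0 := Finset.prod_ne_zero_iff.mpr (fun k _ => hf k)
  have hnp : ((n:ℝ))^n ≠ 0 := pow_ne_zero _ (Nat.cast_ne_zero.mpr hn.ne')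
  rw [div_mul_div_comm, div_mul_div_comm,
    mul_comm ((n:ℝ)^n) (∏ k, ((h k).factorial : ℝ))]

/-- The Kontkanen–Myllymäki recurrence:
`C(K+2, n) = C(K+1, n) + (n/K) · C(K, n)`. -/
theorem stmt2 (K n : ℕ) (hK : 0 < K) (hn : 0 < n) :
    Ccat (K + 2) n = Ccat (K + 1) n + ((n : ℝ) / (K : ℝ)) * Ccat K n := by
  have h := main_coeff K n hK hn
  have hKne : (K:ℝ) ≠ 0 := Nat.cast_ne_zero.mpr hK.ne'
  rw [Ccat_eq (K+2) n hn, Ccat_eq (K+1) n hn, Ccat_eq K n hn]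
  have hcoeff : coeff n (B^(K+2))
      = coeff n (B^(K+1)) + ((n:ℝ)/(K:ℝ)) * coeff n (B^K) := by
    field_simp
    linarith [h]
  rw [hcoeff]
  ring
end

section
/- The parametric complexity of the independence model on a product of finite sets factorizes: Σ over all z^n ∈ (𝒳×𝒴)^n of max over product distributions P_X⊗P_Y of the likelihood equals C_CAT(|𝒳|, n)·C_CAT(|𝒴|, n). -/
/-- Number of occurrences of the value `a` in the sequence `x`. -/
def seqCount {n : ℕ} {α : Type*} [DecidableEq α] (x : Fin n → α) (a : α) : ℕ :=
  (Finset.univ.filter fun i => x i = a).card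

/-- Parametric complexity of the `K`-category categorical model
(sequence form): `C_CAT(K,n) = Σ_{x^n} Π_k (n(X=k)/n)^{n(X=k)}`. -/
noncomputable def CcatSeq (K n : ℕ) : ℝ :=
  ∑ x : Fin n → Fin K,
    ∏ k : Fin K, ((seqCount x k : ℝ) / (n : ℝ)) ^ (seqCount x k)

/-- The parametric complexity of the independence model on a product of
finite alphabets factorizes:
`Σ_{z^n} (max likelihood under independence) = C_CAT(mX,n) · C_CAT(mY,n)`. -/
theorem stmt11 (mX mY n : ℕ) (hn : 0 < n) :
    (∑ z : Fin n → Fin mX × Fin mY,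
      (∏ k : Fin mX,
        ((seqCount (fun i => (z i).1) k : ℝ) / (n : ℝ))
          ^ (seqCount (fun i => (z i).1) k)) *
      (∏ k' : Fin mY,
        ((seqCount (fun i => (z i).2) k' : ℝ) / (n : ℝ))
          ^ (seqCount (fun i => (z i).2) k'))) =
    CcatSeq mX n * CcatSeq mY n := by
  rw [CcatSeq, CcatSeq, Finset.sum_mul_sum, ← Fintype.sum_prod_type']
  apply Fintype.sum_equiv (Equiv.arrowProdEquivProdArrow (Fin n) (fun _ => Fin mX) (fun _ => Fin mY))
  intro z
  rfl
end

section
/- Strict inequality of parametric complexities for n ≥ 2, m_X, m_Y ≥ 2: C_CAT(m_X, n)·C_CAT(m_Y, n) < C_CAT(m_X·m_Y, n). -/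
open Finset

section Aux

variable {n : ℕ} {α β : Type*} [Fintype α] [DecidableEq α] [Fintype β] [DecidableEq β]

/-- The summand of `CcatSeq`, for a general fintype alphabet. -/
noncomputable def termP (x : Fin n → α) : ℝ :=
  ∏ a, ((seqCount x a : ℝ) / (n : ℝ)) ^ (seqCount x a)

lemma termP_nonneg (x : Fin n → α) : 0 ≤ termP x :=
  Finset.prod_nonneg fun a _ => pow_nonneg (div_nonneg (Nat.cast_nonneg _) (Nat.cast_nonneg _)) _

lemma seqCount_sum (x : Fin n → α) : ∑ a, seqCount x a = n := by
  classical
  have h := Finset.card_eq_sum_card_fiberwise (f := x) (s := Finset.univ) (t := Finset.univ)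
    (fun i _ => Finset.mem_univ _)
  simpa [seqCount] using h.symm

lemma seqCount_fst (z : Fin n → α × β) (a : α) :
    seqCount (fun i => (z i).1) a = ∑ b, seqCount z (a, b) := by
  classical
  have h := Finset.card_eq_sum_card_fiberwise (f := fun i => (z i).2)
    (s := Finset.univ.filter fun i => (z i).1 = a) (t := Finset.univ)
    (fun i _ => Finset.mem_univ _)
  rw [seqCount] at *
  rw [h]
  refine Finset.sum_congr rfl fun b _ => ?_
  congr 1
  rw [Finset.filter_filter]
  apply Finset.filter_congr
  intro i _
  simp [Prod.ext_iff, and_comm]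

lemma seqCount_snd (z : Fin n → α × β) (b : β) :
    seqCount (fun i => (z i).2) b = ∑ a, seqCount z (a, b) := by
  classical
  have h := Finset.card_eq_sum_card_fiberwise (f := fun i => (z i).1)
    (s := Finset.univ.filter fun i => (z i).2 = b) (t := Finset.univ)
    (fun i _ => Finset.mem_univ _)
  rw [seqCount] at *
  rw [h]
  refine Finset.sum_congr rfl fun a _ => ?_
  congr 1
  rw [Finset.filter_filter]
  apply Finset.filter_congr
  intro i _
  simp [Prod.ext_iff, and_comm]

/-- The empirical distribution maximizes the likelihood: for any subprobability
vector `p`, `∏ p_a^{c_a} ≤ ∏ (c_a/n)^{c_a}`. -/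
lemma prod_pow_le_termP (hn : 0 < n) (x : Fin n → α) (p : α → ℝ)
    (hp : ∀ a, 0 ≤ p a) (hps : ∑ a, p a ≤ 1) :
    ∏ a, p a ^ seqCount x a ≤ termP x := by
  classical
  set c : α → ℕ := seqCount x with hc
  have hcn : ∑ a, c a = n := seqCount_sum x
  have hn' : (0:ℝ) < n := by exact_mod_cast hn
  set z : α → ℝ := fun a => if c a = 0 then 0 else n * p a / c a with hz
  have hzn : ∀ a, 0 ≤ z a := by
    intro a
    by_cases h : c a = 0
    · simp [hz, h]
    · simp only [hz, if_neg h]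
      exact div_nonneg (mul_nonneg (Nat.cast_nonneg n) (hp a)) (Nat.cast_nonneg _)
  have h1 : ∏ a, z a ^ ((c a : ℝ) / n) ≤ 1 := by
    calc ∏ a, z a ^ ((c a : ℝ) / n)
        ≤ ∑ a, ((c a : ℝ) / n) * z a := by
          apply Real.geom_mean_le_arith_mean_weighted
          · intro a _; positivity
          · rw [← Finset.sum_div, ← Nat.cast_sum, hcn]
            field_simp
          · intro a _; exact hzn a
      _ ≤ ∑ a, p a := by
          apply Finset.sum_le_sum
          intro a _
          by_cases h : c a = 0
          · simp [hz, h, hp a]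
          · have hca : (c a : ℝ) ≠ 0 := by
              exact_mod_cast h
            rw [hz]
            simp only [if_neg h]
            rw [show (c a : ℝ) / n * ((n : ℝ) * p a / c a) = p a by
              field_simp [hca, ne_of_gt hn']]
      _ ≤ 1 := hps
  have h2 : ∏ a, z a ^ c a ≤ 1 := by
    have key : ∏ a, z a ^ c a = (∏ a, z a ^ ((c a : ℝ) / n)) ^ n := by
      rw [← Finset.prod_pow]
      refine Finset.prod_congr rfl fun a _ => ?_
      rw [← Real.rpow_natCast (z a ^ ((c a : ℝ) / n)) n, ← Real.rpow_mul (hzn a),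
        div_mul_cancel₀ _ (ne_of_gt hn'), Real.rpow_natCast]
    rw [key]
    exact pow_le_one₀ (Finset.prod_nonneg fun a _ => Real.rpow_nonneg (hzn a) _) h1
  calc ∏ a, p a ^ c a
      = (∏ a, z a ^ c a) * termP x := by
        rw [termP, ← Finset.prod_mul_distrib]
        refine Finset.prod_congr rfl fun a _ => ?_
        by_cases h : c a = 0
        · have h' : seqCount x a = 0 := h
          simp [h, h']
        · rw [← mul_pow]
          congr 1
          have hca : (c a : ℝ) ≠ 0 := by exact_mod_cast h
          rw [hz]
          simp only [if_neg h]
          field_simp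
          rfl
    _ ≤ 1 * termP x := mul_le_mul_of_nonneg_right h2 (termP_nonneg x)
    _ = termP x := one_mul _

/-- Key termwise inequality: the joint ML term dominates the product of marginal ML terms. -/
lemma termP_marg_le (hn : 0 < n) (z : Fin n → α × β) :
    termP (fun i => (z i).1) * termP (fun i => (z i).2) ≤ termP z := by
  classical
  have hn' : (0:ℝ) < n := by exact_mod_cast hn
  have key := prod_pow_le_termP hn z
    (fun q => ((seqCount (fun i => (z i).1) q.1 : ℝ) / n) *
      ((seqCount (fun i => (z i).2) q.2 : ℝ) / n))
    (fun q => by positivity) ?_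
  · refine le_trans (le_of_eq ?_) key
    have lhs1 : ∏ q : α × β, (((seqCount (fun i => (z i).1) q.1 : ℝ) / n) *
          ((seqCount (fun i => (z i).2) q.2 : ℝ) / n)) ^ seqCount z q
        = (∏ q : α × β, ((seqCount (fun i => (z i).1) q.1 : ℝ) / n) ^ seqCount z q) *
          ∏ q : α × β, ((seqCount (fun i => (z i).2) q.2 : ℝ) / n) ^ seqCount z q := by
      rw [← Finset.prod_mul_distrib]
      exact Finset.prod_congr rfl fun q _ => mul_pow _ _ _
    rw [lhs1]
    congr 1
    · rw [termP, Fintype.prod_prod_type]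
      refine Finset.prod_congr rfl fun j _ => ?_
      show ((seqCount (fun i => (z i).1) j : ℝ) / n) ^ seqCount (fun i => (z i).1) j
          = ∏ y : β, ((seqCount (fun i => (z i).1) j : ℝ) / n) ^ seqCount z (j, y)
      rw [Finset.prod_pow_eq_pow_sum, ← seqCount_fst z j]
    · rw [termP, Fintype.prod_prod_type, Finset.prod_comm]
      refine Finset.prod_congr rfl fun k _ => ?_
      show ((seqCount (fun i => (z i).2) k : ℝ) / n) ^ seqCount (fun i => (z i).2) k
          = ∏ j : α, ((seqCount (fun i => (z i).2) k : ℝ) / n) ^ seqCount z (j, k)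
      rw [Finset.prod_pow_eq_pow_sum, ← seqCount_snd z k]
  · rw [Fintype.sum_prod_type]
    show (∑ x : α, ∑ y : β, ((seqCount (fun i => (z i).1) x : ℝ) / n) *
        ((seqCount (fun i => (z i).2) y : ℝ) / n)) ≤ 1
    rw [← Finset.sum_mul_sum,
      ← Finset.sum_div, ← Finset.sum_div, ← Nat.cast_sum, ← Nat.cast_sum,
      seqCount_sum, seqCount_sum]
    field_simp
    exact le_rfl

lemma seqCount_comp_equiv (e : α ≃ β) (x : Fin n → α) (a : α) :
    seqCount (fun i => e (x i)) (e a) = seqCount x a := by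
  unfold seqCount
  congr 1
  apply Finset.filter_congr
  intro i _
  simp [e.injective.eq_iff]

lemma termP_comp_equiv (e : α ≃ β) (x : Fin n → α) :
    termP (fun i => e (x i)) = termP x := by
  unfold termP
  refine (Fintype.prod_equiv e _ _ fun b => ?_).symm
  rw [seqCount_comp_equiv]

/-- Value of the term for the sequence `a, b, b, …, b`. -/
lemma termP_two [NeZero n] (hn : 2 ≤ n) (a b : α) (hab : a ≠ b) :
    termP (fun i : Fin n => if i = 0 then a else b)
      = (1 / (n:ℝ)) * (((n:ℝ) - 1) / n) ^ (n - 1) := by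
  classical
  set x : Fin n → α := fun i => if i = 0 then a else b with hx
  have hca : seqCount x a = 1 := by
    unfold seqCount
    have : (Finset.univ.filter fun i => x i = a) = {0} := by
      ext i
      by_cases h : i = 0 <;> simp [hx, h, hab, hab.symm]
    rw [this, Finset.card_singleton]
  have hcb : seqCount x b = n - 1 := by
    unfold seqCount
    have : (Finset.univ.filter fun i => x i = b) = {(0 : Fin n)}ᶜ := by
      ext i
      by_cases h : i = 0 <;> simp [hx, h, hab, hab.symm]
    rw [this, Finset.card_compl, Finset.card_singleton, Fintype.card_fin]
  have hother : ∀ c : α, c ≠ a → c ≠ b → seqCount x c = 0 := by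
    intro c hca' hcb'
    unfold seqCount
    rw [Finset.card_eq_zero]
    ext i
    by_cases h : i = 0 <;> simp [hx, h, hca'.symm, hcb'.symm]
  unfold termP
  rw [← Finset.prod_subset (Finset.subset_univ ({a, b} : Finset α))
    (fun c _ hc => by
      simp only [Finset.mem_insert, Finset.mem_singleton, not_or] at hc
      rw [hother c hc.1 hc.2]
      simp)]
  rw [Finset.prod_pair hab, hca, hcb]
  have h1 : ((n : ℝ) - 1) = ((n - 1 : ℕ) : ℝ) := by
    rw [Nat.cast_sub (by omega)]; simp
  rw [h1]
  norm_num

end Aux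

/-- Strict inequality of parametric complexities for `n ≥ 2`,
`mX, mY ≥ 2`: `C_CAT(mX, n) · C_CAT(mY, n) < C_CAT(mX·mY, n)`. -/
theorem stmt14 (mX mY n : ℕ) (hn : 2 ≤ n) (hX : 2 ≤ mX) (hY : 2 ≤ mY) :
    CcatSeq mX n * CcatSeq mY n < CcatSeq (mX * mY) n := by
  classical
  haveI : NeZero n := ⟨by omega⟩
  haveI : NeZero mX := ⟨by omega⟩
  haveI : NeZero mY := ⟨by omega⟩
  have hn0 : 0 < n := by omega
  -- rewrite the RHS as a sum over sequences of pairs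
  have hR : CcatSeq (mX * mY) n = ∑ z : Fin n → Fin mX × Fin mY, termP z := by
    rw [CcatSeq]
    refine (Fintype.sum_equiv
      (Equiv.arrowCongr (Equiv.refl (Fin n)) finProdFinEquiv) _ _ fun z => ?_).symm
    have : (Equiv.arrowCongr (Equiv.refl (Fin n)) finProdFinEquiv) z
        = fun i => finProdFinEquiv (z i) := rfl
    rw [this, ← termP_comp_equiv finProdFinEquiv z]
    rfl
  -- rewrite the LHS as a sum over sequences of pairs
  have hL : CcatSeq mX n * CcatSeq mY n
      = ∑ z : Fin n → Fin mX × Fin mY,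
          termP (fun i => (z i).1) * termP (fun i => (z i).2) := by
    rw [CcatSeq, CcatSeq]
    have : (∑ x : Fin n → Fin mX, termP x) * (∑ y : Fin n → Fin mY, termP y)
        = ∑ p : (Fin n → Fin mX) × (Fin n → Fin mY), termP p.1 * termP p.2 := by
      rw [Fintype.sum_mul_sum, Fintype.sum_prod_type]
    rw [show (∑ x : Fin n → Fin mX,
        ∏ k : Fin mX, ((seqCount x k : ℝ) / (n : ℝ)) ^ (seqCount x k))
        = ∑ x : Fin n → Fin mX, termP x from rfl,
      show (∑ y : Fin n → Fin mY,
        ∏ k : Fin mY, ((seqCount y k : ℝ) / (n : ℝ)) ^ (seqCount y k))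
        = ∑ y : Fin n → Fin mY, termP y from rfl, this]
    exact Fintype.sum_equiv
      ((Equiv.arrowProdEquivProdArrow (Fin n) (fun _ => Fin mX) (fun _ => Fin mY)).symm)
      (fun p : (Fin n → Fin mX) × (Fin n → Fin mY) => termP p.1 * termP p.2)
      (fun z : Fin n → Fin mX × Fin mY =>
        termP (fun i => (z i).1) * termP (fun i => (z i).2))
      (fun p => rfl)
  rw [hL, hR]
  -- strict inequality of sums
  have h01X : (0 : Fin mX) ≠ 1 := by
    simp [Fin.ext_iff, Fin.val_one', Nat.mod_eq_of_lt (show 1 < mX by omega)]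
  have h01Y : (0 : Fin mY) ≠ 1 := by
    simp [Fin.ext_iff, Fin.val_one', Nat.mod_eq_of_lt (show 1 < mY by omega)]
  set z0 : Fin n → Fin mX × Fin mY :=
    fun i => if i = 0 then ((0 : Fin mX), (0 : Fin mY)) else (1, 1) with hz0
  set T : ℝ := (1 / (n:ℝ)) * (((n:ℝ) - 1) / n) ^ (n - 1) with hT
  have hfst : (fun i => (z0 i).1) = fun i : Fin n => if i = 0 then (0 : Fin mX) else 1 := by
    funext i; by_cases h : i = 0 <;> simp [hz0, h]
  have hsnd : (fun i => (z0 i).2) = fun i : Fin n => if i = 0 then (0 : Fin mY) else 1 := by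
    funext i; by_cases h : i = 0 <;> simp [hz0, h]
  have hTfst : termP (fun i => (z0 i).1) = T := by
    rw [hfst]; exact termP_two hn _ _ h01X
  have hTsnd : termP (fun i => (z0 i).2) = T := by
    rw [hsnd]; exact termP_two hn _ _ h01Y
  have hTz : termP z0 = T := by
    rw [hz0]
    exact termP_two hn _ _ (by simp [Prod.ext_iff, h01X])
  have hn' : (2:ℝ) ≤ (n:ℝ) := by exact_mod_cast hn
  have hT0 : 0 < T := by
    rw [hT]
    have h1 : (0:ℝ) < 1 / n := by positivity
    have h2 : (0:ℝ) < ((n:ℝ) - 1) / n := by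
      apply div_pos <;> linarith
    positivity
  have hT1 : T < 1 := by
    rw [hT]
    have h2 : (((n:ℝ) - 1) / n) ^ (n - 1) ≤ 1 := by
      apply pow_le_one₀
      · apply div_nonneg <;> linarith
      · rw [div_le_one (by linarith)]; linarith
    have h3 : (0:ℝ) ≤ (((n:ℝ) - 1) / n) ^ (n - 1) := by
      apply pow_nonneg; apply div_nonneg <;> linarith
    calc (1 / (n:ℝ)) * (((n:ℝ) - 1) / n) ^ (n - 1)
        ≤ (1 / (n:ℝ)) * 1 := by
          apply mul_le_mul_of_nonneg_left h2 (by positivity)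
      _ = 1 / (n:ℝ) := mul_one _
      _ < 1 := by rw [div_lt_one (by linarith)]; linarith
  apply Finset.sum_lt_sum
  · intro z _
    exact termP_marg_le hn0 z
  · refine ⟨z0, Finset.mem_univ _, ?_⟩
    rw [hTfst, hTsnd, hTz]
    calc T * T < 1 * T := mul_lt_mul_of_pos_right hT1 hT0
      _ = T := one_mul T
end
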